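/- Sampling probability asymptotics under strong negative selection with fixed sample size (equation (7a) of the paper): fix θ₁, θ₂ > 0 and natural numbers n₁, n₂ with n = n₁ + n₂. Define q(n₁,n₂;β) := C(n,n₁) · I(n₁,n₂,β) / I(0,0,β), where C(n,n₁) is the binomial coefficient and I(m₁,m₂,β) := ∫₀¹ x^{θ₁+m₁-1}(1-x)^{θ₂+m₂-1} e^{βx} dx. Then lim_{β → -∞} |β|^{n₁} · q(n₁,n₂;β) = C(n,n₁) · Γ(θ₁+n₁)/Γ(θ₁). -/

import Mathlib

open Real Filter Topology

open MeasureTheory intervalIntegral Set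

lemma betaInt_left (θ τ : ℝ) (hθ : 0 < θ) :
    IntervalIntegrable (fun x : ℝ => x ^ (θ - 1) * (1 - x) ^ (τ - 1)) volume 0 (1/2) := by
  apply (intervalIntegrable_rpow' (by linarith : (-1:ℝ) < θ - 1)).mul_continuousOn
  apply continuousOn_of_forall_continuousAt
  intro x hx
  rw [uIcc_of_le (by norm_num : (0:ℝ) ≤ 1/2)] at hx
  exact ContinuousAt.rpow_const (by fun_prop) (Or.inl (by simp; linarith [hx.2]))

lemma betaInt (θ τ : ℝ) (hθ : 0 < θ) (hτ : 0 < τ) :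
    IntervalIntegrable (fun x : ℝ => x ^ (θ - 1) * (1 - x) ^ (τ - 1)) volume 0 1 := by
  refine (betaInt_left θ τ hθ).trans ?_
  have h := (betaInt_left τ θ hτ).comp_sub_left 1
  have h2 : (fun x : ℝ => (1 - x) ^ (τ - 1) * (1 - (1 - x)) ^ (θ - 1))
      = fun x : ℝ => x ^ (θ - 1) * (1 - x) ^ (τ - 1) := by
    funext x; rw [sub_sub_cancel, mul_comm]
  rw [h2] at h
  norm_num at h
  exact h.symm

lemma key_bounds (θ τ : ℝ) (hθ : 0 < θ) (hτ : 0 < τ) {b : ℝ} (hb4 : 4 ≤ b) :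
    (1 - (b ^ (1/2:ℝ))⁻¹) ^ |τ - 1|
        * (∫ u in (0:ℝ)..(b ^ (1/2:ℝ)), Real.exp (-u) * u ^ (θ - 1))
      ≤ b ^ θ * ∫ x in (0:ℝ)..1, x ^ (θ - 1) * (1 - x) ^ (τ - 1) * Real.exp (-(b * x)) ∧
    b ^ θ * ∫ x in (0:ℝ)..1, x ^ (θ - 1) * (1 - x) ^ (τ - 1) * Real.exp (-(b * x))
      ≤ (1 - (b ^ (1/2:ℝ))⁻¹) ^ (-|τ - 1|)
          * (∫ u in (0:ℝ)..(b ^ (1/2:ℝ)), Real.exp (-u) * u ^ (θ - 1))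
        + b ^ θ * Real.exp (-(b ^ (1/2:ℝ)))
          * ∫ x in (0:ℝ)..1, x ^ (θ - 1) * (1 - x) ^ (τ - 1) := by
  have hb : (0:ℝ) < b := by linarith
  set κ := |τ - 1| with hκ
  set sb : ℝ := b ^ (1/2:ℝ) with hsb
  have hs2 : 2 ≤ sb := by
    have h42 : (4:ℝ) ^ (1/2:ℝ) = 2 := by
      rw [show (4:ℝ) = 2 ^ (2:ℕ) by norm_num, ← Real.rpow_natCast 2 2,
        ← Real.rpow_mul (by norm_num)]
      norm_num
    calc (2:ℝ) = 4 ^ (1/2:ℝ) := h42.symm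
      _ ≤ b ^ (1/2:ℝ) := Real.rpow_le_rpow (by norm_num) hb4 (by norm_num)
  have hspos : 0 < sb := by linarith
  set δ : ℝ := sb⁻¹ with hδdef
  have hδpos : 0 < δ := inv_pos.2 hspos
  have hδhalf : δ ≤ 1/2 := by
    rw [hδdef, show (1:ℝ)/2 = 2⁻¹ by norm_num]
    exact inv_anti₀ two_pos hs2
  have hbδ : b * δ = sb := by
    have hbsq : b = sb * sb := by rw [hsb, ← Real.rpow_add hb]; norm_num
    rw [hδdef, ← div_eq_mul_inv, div_eq_iff hspos.ne']
    exact hbsq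
  have h1δ : (0:ℝ) < 1 - δ := by linarith
  set f : ℝ → ℝ := fun x => x ^ (θ - 1) * (1 - x) ^ (τ - 1) * Real.exp (-(b * x)) with hf
  set g : ℝ → ℝ := fun x => x ^ (θ - 1) * (1 - x) ^ (τ - 1) with hg
  set p : ℝ → ℝ := fun x => x ^ (θ - 1) * Real.exp (-(b * x)) with hp
  have hcont : Continuous fun x : ℝ => Real.exp (-(b * x)) := by fun_prop
  have hg1 : IntervalIntegrable g volume 0 1 := betaInt θ τ hθ hτ
  have hf1 : IntervalIntegrable f volume 0 1 := hg1.mul_continuousOn hcont.continuousOn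
  have hsub1 : uIcc (0:ℝ) δ ⊆ uIcc (0:ℝ) 1 := by
    rw [uIcc_of_le hδpos.le, uIcc_of_le (by norm_num : (0:ℝ) ≤ 1)]
    exact Icc_subset_Icc le_rfl (by linarith)
  have hsub2 : uIcc δ (1:ℝ) ⊆ uIcc (0:ℝ) 1 := by
    rw [uIcc_of_le (by linarith : δ ≤ 1), uIcc_of_le (by norm_num : (0:ℝ) ≤ 1)]
    exact Icc_subset_Icc (by linarith) le_rfl
  have hfδ : IntervalIntegrable f volume 0 δ := hf1.mono_set hsub1
  have hfδ1 : IntervalIntegrable f volume δ 1 := hf1.mono_set hsub2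
  have hg0δ : IntervalIntegrable g volume 0 δ := hg1.mono_set hsub1
  have hgδ1 : IntervalIntegrable g volume δ 1 := hg1.mono_set hsub2
  have hpδ : IntervalIntegrable p volume 0 δ :=
    (intervalIntegrable_rpow' (by linarith : (-1:ℝ) < θ - 1)).mul_continuousOn
      hcont.continuousOn
  have hpnn : ∀ x : ℝ, 0 ≤ x → 0 ≤ p x := fun x hx =>
    mul_nonneg (Real.rpow_nonneg hx _) (Real.exp_pos _).le
  have hgnn : ∀ x : ℝ, 0 ≤ x → x ≤ 1 → 0 ≤ g x := fun x h1 h2 =>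
    mul_nonneg (Real.rpow_nonneg h1 _) (Real.rpow_nonneg (by linarith) _)
  have hfnn : ∀ x : ℝ, 0 ≤ x → x ≤ 1 → 0 ≤ f x := fun x h1 h2 =>
    mul_nonneg (hgnn x h1 h2) (Real.exp_pos _).le
  -- the substitution identity
  have hPv : b ^ θ * ∫ x in (0:ℝ)..δ, p x
      = ∫ u in (0:ℝ)..sb, Real.exp (-u) * u ^ (θ - 1) := by
    have e2 : (∫ x in (0:ℝ)..δ, Real.exp (-(b * x)) * (b * x) ^ (θ - 1))
        = b ^ (θ - 1) * ∫ x in (0:ℝ)..δ, p x := by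
      rw [← intervalIntegral.integral_const_mul]
      apply integral_congr
      intro x hx
      rw [uIcc_of_le hδpos.le] at hx
      show Real.exp (-(b * x)) * (b * x) ^ (θ - 1) = b ^ (θ - 1) * p x
      rw [Real.mul_rpow hb.le hx.1]
      simp only [hp]
      ring
    have e1 : (∫ x in (0:ℝ)..δ, Real.exp (-(b * x)) * (b * x) ^ (θ - 1))
        = b⁻¹ * ∫ u in (0:ℝ)..sb, Real.exp (-u) * u ^ (θ - 1) := by
      have := integral_comp_mul_left (a := (0:ℝ)) (b := δ)
        (fun u : ℝ => Real.exp (-u) * u ^ (θ - 1)) hb.ne'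
      rw [this, mul_zero, hbδ, smul_eq_mul]
    have hbθ : b * b ^ (θ - 1) = b ^ θ := by
      calc b * b ^ (θ - 1) = b ^ (1:ℝ) * b ^ (θ - 1) := by rw [Real.rpow_one]
        _ = b ^ (1 + (θ - 1)) := (Real.rpow_add hb 1 (θ - 1)).symm
        _ = b ^ θ := by ring_nf
    calc b ^ θ * ∫ x in (0:ℝ)..δ, p x
        = b * (b ^ (θ - 1) * ∫ x in (0:ℝ)..δ, p x) := by rw [← mul_assoc, hbθ]
      _ = b * (b⁻¹ * ∫ u in (0:ℝ)..sb, Real.exp (-u) * u ^ (θ - 1)) := by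
          rw [← e2, e1]
      _ = ∫ u in (0:ℝ)..sb, Real.exp (-u) * u ^ (θ - 1) := by
          rw [← mul_assoc, mul_inv_cancel₀ hb.ne', one_mul]
  have hsplit := integral_add_adjacent_intervals hfδ hfδ1
  have hgsplit := integral_add_adjacent_intervals hg0δ hgδ1
  have htail0 : 0 ≤ ∫ x in δ..1, f x :=
    integral_nonneg (by linarith) (fun u hu => hfnn u (by linarith [hu.1]) hu.2)
  have hghead0 : 0 ≤ ∫ x in (0:ℝ)..δ, g x :=
    integral_nonneg hδpos.le (fun u hu => hgnn u hu.1 (by linarith [hu.2]))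
  have hbθnn : (0:ℝ) ≤ b ^ θ := Real.rpow_nonneg hb.le θ
  constructor
  · -- lower bound
    have hcle : ∀ x ∈ Icc (0:ℝ) δ, (1 - δ) ^ κ ≤ (1 - x) ^ (τ - 1) := by
      intro x hx
      have h1x : 1 - δ ≤ 1 - x := by linarith [hx.2]
      rcases le_total 1 τ with h | h
      · rw [hκ, abs_of_nonneg (by linarith : (0:ℝ) ≤ τ - 1)]
        exact Real.rpow_le_rpow h1δ.le h1x (by linarith)
      · have h1 : (1 - δ) ^ κ ≤ 1 :=
          Real.rpow_le_one h1δ.le (by linarith) (abs_nonneg _)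
        have h2 : 1 ≤ (1 - x) ^ (τ - 1) :=
          Real.one_le_rpow_of_pos_of_le_one_of_nonpos (by linarith) (by linarith [hx.1])
            (by linarith)
        linarith
    have l1 : (1 - δ) ^ κ * ∫ x in (0:ℝ)..δ, p x ≤ ∫ x in (0:ℝ)..δ, f x := by
      rw [← intervalIntegral.integral_const_mul]
      apply integral_mono_on hδpos.le (hpδ.const_mul _) hfδ
      intro x hx
      calc (1 - δ) ^ κ * p x ≤ (1 - x) ^ (τ - 1) * p x :=
            mul_le_mul_of_nonneg_right (hcle x hx) (hpnn x hx.1)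
        _ = f x := by simp only [hp, hf]; ring
    calc (1 - δ) ^ κ * ∫ u in (0:ℝ)..sb, Real.exp (-u) * u ^ (θ - 1)
        = b ^ θ * ((1 - δ) ^ κ * ∫ x in (0:ℝ)..δ, p x) := by rw [← hPv]; ring
      _ ≤ b ^ θ * ∫ x in (0:ℝ)..δ, f x := mul_le_mul_of_nonneg_left l1 hbθnn
      _ ≤ b ^ θ * ∫ x in (0:ℝ)..1, f x := by
          apply mul_le_mul_of_nonneg_left _ hbθnn
          linarith [hsplit]
  · -- upper bound
    have hcge : ∀ x ∈ Icc (0:ℝ) δ, (1 - x) ^ (τ - 1) ≤ (1 - δ) ^ (-κ) := by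
      intro x hx
      have h1x : 1 - δ ≤ 1 - x := by linarith [hx.2]
      rcases le_total 1 τ with h | h
      · have h1 : (1 - x) ^ (τ - 1) ≤ 1 :=
          Real.rpow_le_one (by linarith [hx.2]) (by linarith [hx.1]) (by linarith)
        have h2 : 1 ≤ (1 - δ) ^ (-κ) :=
          Real.one_le_rpow_of_pos_of_le_one_of_nonpos h1δ (by linarith)
            (by simp [hκ, abs_nonneg])
        linarith
      · rw [hκ, abs_of_nonpos (by linarith : τ - 1 ≤ 0), neg_neg]
        exact Real.rpow_le_rpow_of_nonpos h1δ h1x (by linarith)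
    have u1 : (∫ x in (0:ℝ)..δ, f x) ≤ (1 - δ) ^ (-κ) * ∫ x in (0:ℝ)..δ, p x := by
      rw [← intervalIntegral.integral_const_mul]
      apply integral_mono_on hδpos.le hfδ (hpδ.const_mul _)
      intro x hx
      calc f x = (1 - x) ^ (τ - 1) * p x := by simp only [hp, hf]; ring
        _ ≤ (1 - δ) ^ (-κ) * p x :=
            mul_le_mul_of_nonneg_right (hcge x hx) (hpnn x hx.1)
    have u2 : (∫ x in δ..1, f x) ≤ Real.exp (-sb) * ∫ x in (0:ℝ)..1, g x := by
      have step : (∫ x in δ..1, f x) ≤ ∫ x in δ..1, Real.exp (-sb) * g x := by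
        apply integral_mono_on (by linarith) hfδ1 (hgδ1.const_mul _)
        intro x hx
        have hxg : 0 ≤ g x := hgnn x (by linarith [hx.1]) hx.2
        have hexp : Real.exp (-(b * x)) ≤ Real.exp (-sb) := by
          apply Real.exp_le_exp.2
          have : sb ≤ b * x := by
            rw [← hbδ]
            exact mul_le_mul_of_nonneg_left hx.1 hb.le
          linarith
        calc f x = g x * Real.exp (-(b * x)) := by simp only [hg, hf]
          _ ≤ g x * Real.exp (-sb) := mul_le_mul_of_nonneg_left hexp hxg
          _ = Real.exp (-sb) * g x := by ring
      rw [intervalIntegral.integral_const_mul] at step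
      refine step.trans ?_
      apply mul_le_mul_of_nonneg_left _ (Real.exp_pos _).le
      linarith [hgsplit]
    calc b ^ θ * ∫ x in (0:ℝ)..1, f x
        = b ^ θ * (∫ x in (0:ℝ)..δ, f x) + b ^ θ * ∫ x in δ..1, f x := by
          rw [← hsplit]; ring
      _ ≤ b ^ θ * ((1 - δ) ^ (-κ) * ∫ x in (0:ℝ)..δ, p x)
          + b ^ θ * (Real.exp (-sb) * ∫ x in (0:ℝ)..1, g x) := by
          gcongr
      _ = (1 - δ) ^ (-κ) * (∫ u in (0:ℝ)..sb, Real.exp (-u) * u ^ (θ - 1))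
          + b ^ θ * Real.exp (-sb) * ∫ x in (0:ℝ)..1, g x := by
          rw [← hPv]; ring

lemma key (θ τ : ℝ) (hθ : 0 < θ) (hτ : 0 < τ) :
    Filter.Tendsto (fun b : ℝ => b ^ θ *
      ∫ x in (0:ℝ)..1, x ^ (θ - 1) * (1 - x) ^ (τ - 1) * Real.exp (-(b * x)))
      Filter.atTop (𝓝 (Real.Gamma θ)) := by
  have hG : Tendsto (fun T : ℝ => ∫ u in (0:ℝ)..T, Real.exp (-u) * u ^ (θ - 1))
      atTop (𝓝 (Real.Gamma θ)) := by
    rw [Real.Gamma_eq_integral hθ]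
    exact intervalIntegral_tendsto_integral_Ioi 0 (Real.GammaIntegral_convergent hθ) tendsto_id
  have hs : Tendsto (fun b : ℝ => b ^ (1/2:ℝ)) atTop atTop := tendsto_rpow_atTop (by norm_num)
  have hGs : Tendsto (fun b : ℝ =>
      ∫ u in (0:ℝ)..(b ^ (1/2:ℝ)), Real.exp (-u) * u ^ (θ - 1))
      atTop (𝓝 (Real.Gamma θ)) := hG.comp hs
  have hone : Tendsto (fun b : ℝ => 1 - (b ^ (1/2:ℝ))⁻¹) atTop (𝓝 1) := by
    have h0 : Tendsto (fun _ : ℝ => (1:ℝ)) atTop (𝓝 1) := tendsto_const_nhds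
    simpa using h0.sub hs.inv_tendsto_atTop
  have hlo : Tendsto (fun b : ℝ => (1 - (b ^ (1/2:ℝ))⁻¹) ^ |τ - 1|
      * ∫ u in (0:ℝ)..(b ^ (1/2:ℝ)), Real.exp (-u) * u ^ (θ - 1))
      atTop (𝓝 (Real.Gamma θ)) := by
    have h1 := hone.rpow_const (p := |τ - 1|) (Or.inl one_ne_zero)
    simpa using h1.mul hGs
  have hexp0 : Tendsto (fun b : ℝ => b ^ θ * Real.exp (-(b ^ (1/2:ℝ)))
      * ∫ x in (0:ℝ)..1, x ^ (θ - 1) * (1 - x) ^ (τ - 1)) atTop (𝓝 0) := by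
    have h2 : Tendsto (fun b : ℝ => b ^ θ * Real.exp (-(b ^ (1/2:ℝ)))) atTop (𝓝 0) := by
      have base := (tendsto_rpow_mul_exp_neg_mul_atTop_nhds_zero (2*θ) 1 one_pos).comp hs
      apply base.congr'
      filter_upwards [eventually_gt_atTop (0:ℝ)] with b hb
      have hbb : (b ^ (1/2:ℝ)) ^ (2*θ) = b ^ θ := by
        rw [← Real.rpow_mul hb.le, show (1/2:ℝ)*(2*θ) = θ by ring]
      show (b ^ (1/2:ℝ)) ^ (2*θ) * Real.exp (-1 * b ^ (1/2:ℝ)) = _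
      rw [hbb, neg_one_mul]
    simpa using h2.mul_const _
  have hhi : Tendsto (fun b : ℝ => (1 - (b ^ (1/2:ℝ))⁻¹) ^ (-|τ - 1|)
      * (∫ u in (0:ℝ)..(b ^ (1/2:ℝ)), Real.exp (-u) * u ^ (θ - 1))
      + b ^ θ * Real.exp (-(b ^ (1/2:ℝ)))
        * ∫ x in (0:ℝ)..1, x ^ (θ - 1) * (1 - x) ^ (τ - 1))
      atTop (𝓝 (Real.Gamma θ)) := by
    have h1 := hone.rpow_const (p := -|τ - 1|) (Or.inl one_ne_zero)
    have := (h1.mul hGs).add hexp0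
    simpa using this
  refine tendsto_of_tendsto_of_tendsto_of_le_of_le' hlo hhi ?_ ?_
  · filter_upwards [eventually_ge_atTop (4:ℝ)] with b hb4
    exact (key_bounds θ τ hθ hτ hb4).1
  · filter_upwards [eventually_ge_atTop (4:ℝ)] with b hb4
    exact (key_bounds θ τ hθ hτ hb4).2

/-- Sampling probability asymptotics under strong negative selection with fixed
sample size (eq. (7a)): with
`q(n₁,n₂;β) = C(n,n₁)·I(n₁,n₂,β)/I(0,0,β)` where
`I(m₁,m₂,β) = ∫₀¹ x^{θ₁+m₁-1}(1-x)^{θ₂+m₂-1}e^{βx} dx`,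
one has `lim_{β→-∞} |β|^{n₁} q(n₁,n₂;β) = C(n,n₁)·Γ(θ₁+n₁)/Γ(θ₁)`. -/
theorem sampling_prob_strong_neg_selection (θ₁ θ₂ : ℝ) (hθ₁ : 0 < θ₁) (hθ₂ : 0 < θ₂)
    (n₁ n₂ : ℕ) :
    Filter.Tendsto (fun β : ℝ =>
        |β| ^ n₁ * ((Nat.choose (n₁ + n₂) n₁ : ℝ) *
          (∫ x in (0:ℝ)..1,
            x ^ (θ₁ + n₁ - 1) * (1 - x) ^ (θ₂ + n₂ - 1) * Real.exp (β * x)) /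
          (∫ x in (0:ℝ)..1, x ^ (θ₁ - 1) * (1 - x) ^ (θ₂ - 1) * Real.exp (β * x))))
      Filter.atBot
      (𝓝 ((Nat.choose (n₁ + n₂) n₁ : ℝ) * Real.Gamma (θ₁ + n₁) / Real.Gamma θ₁)) := by
  have hθ₁n : 0 < θ₁ + (n₁ : ℝ) := by positivity
  have hθ₂n : 0 < θ₂ + (n₂ : ℝ) := by positivity
  have k1 := (key (θ₁ + n₁) (θ₂ + n₂) hθ₁n hθ₂n).comp tendsto_neg_atBot_atTop
  have k0 := (key θ₁ θ₂ hθ₁ hθ₂).comp tendsto_neg_atBot_atTop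
  simp only [Function.comp_def, neg_mul, neg_neg] at k1 k0
  have hdiv := k1.div k0 (Real.Gamma_pos_of_pos hθ₁).ne'
  have hC := hdiv.const_mul ((Nat.choose (n₁ + n₂) n₁ : ℝ))
  rw [show (Nat.choose (n₁ + n₂) n₁ : ℝ) * Real.Gamma (θ₁ + n₁) / Real.Gamma θ₁
    = (Nat.choose (n₁ + n₂) n₁ : ℝ) * (Real.Gamma (θ₁ + n₁) / Real.Gamma θ₁) by ring]
  apply hC.congr'
  filter_upwards [eventually_lt_atBot (0:ℝ)] with β hβ
  have hb : 0 < -β := by linarith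
  have habs : |β| = -β := abs_of_neg hβ
  have hratio : (-β) ^ (θ₁ + (n₁:ℝ)) / (-β) ^ θ₁ = |β| ^ n₁ := by
    rw [Real.rpow_add hb, habs, Real.rpow_natCast,
      mul_comm ((-β) ^ θ₁), mul_div_assoc, div_self (Real.rpow_pos_of_pos hb θ₁).ne',
      mul_one]
  simp only [Pi.div_apply, Function.comp_apply, neg_mul, neg_neg]
  rw [mul_div_mul_comm, hratio]
  ring
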